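/- Let n ≥ 3, let c₁,…,c_s ∈ ℝⁿ be distinct points, let λ₁,…,λ_s, k, k₁ be real constants, and define u(x) = Σ_{l=1}^{s} k·λ_l·|x−c_l|^{2−n} − k₁ for x ∈ ℝⁿ ∖ {c₁,…,c_s}, where |x−c_l| denotes the Euclidean distance. Let Ω ⊆ ℝⁿ ∖ {c₁,…,c_s} be an open set on which u > 0, and set N = 1/u, φ = N^{1/(n−2)}, ψ = √((n−1)/(2(n−2)))·(1 − N). Then the triple (φ, N, ψ) satisfies the electrostatic PDE system with cosmological constant Λ = 0 on Ω. -/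

import Mathlib

/-- The partial derivative of `f : ℝⁿ → ℝ` in the `i`-th coordinate direction. -/
noncomputable def pd {n : ℕ} (i : Fin n) (f : (Fin n → ℝ) → ℝ) : (Fin n → ℝ) → ℝ :=
  fun x => fderiv ℝ f x (Pi.single i 1)

/-- The electrostatic PDE system with cosmological constant `Λ` on `Ω ⊆ ℝⁿ`
(equations (2.2)-(2.5) of the paper). -/
def ElectrostaticSystem {n : ℕ} (Ω : Set (Fin n → ℝ)) (φ N ψ : (Fin n → ℝ) → ℝ)
    (Λ : ℝ) : Prop :=
  ∀ x ∈ Ω,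
    (∀ i j : Fin n, i ≠ j →
      ((n : ℝ) - 2) * N x * pd i (pd j φ) x - φ x * pd i (pd j N) x
        - pd i φ x * pd j N x - pd j φ x * pd i N x
        + (2 * φ x / N x) * (pd i ψ x * pd j ψ x) = 0) ∧
    (∀ i : Fin n,
      φ x * (((n : ℝ) - 2) * N x * pd i (pd i φ) x - φ x * pd i (pd i N) x
          - 2 * pd i φ x * pd i N x + (2 * φ x / N x) * (pd i ψ x) ^ 2)
        + ∑ k : Fin n, (φ x * N x * pd k (pd k φ) x + φ x * pd k φ x * pd k N x
          - ((n : ℝ) - 1) * N x * (pd k φ x) ^ 2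
          - (2 / (((n : ℝ) - 1) * N x)) * (φ x) ^ 2 * (pd k ψ x) ^ 2)
        = (2 * Λ / ((n : ℝ) - 1)) * N x) ∧
    (∑ k : Fin n, (N x * φ x * pd k (pd k ψ) x
        - ((n : ℝ) - 2) * N x * pd k φ x * pd k ψ x
        - φ x * pd k ψ x * pd k N x) = 0) ∧
    (∑ k : Fin n, ((φ x) ^ 2 * N x * pd k (pd k N) x
        - ((n : ℝ) - 2) * φ x * pd k φ x * N x * pd k N x
        - (2 * ((n : ℝ) - 2) / ((n : ℝ) - 1)) * (φ x) ^ 2 * (pd k ψ x) ^ 2)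
      = -(2 * Λ / ((n : ℝ) - 1)) * (N x) ^ 2)


open Real Filter

noncomputable section MPaux

def qf {n : ℕ} (c x : Fin n → ℝ) : ℝ := ∑ i, (x i - c i) ^ 2

def Dq {n : ℕ} (c x : Fin n → ℝ) : (Fin n → ℝ) →L[ℝ] ℝ :=
  ∑ i, (2 * (x i - c i)) • ContinuousLinearMap.proj i

lemma hasFDerivAt_qf {n : ℕ} (c x : Fin n → ℝ) : HasFDerivAt (qf c) (Dq c x) x := by
  have h : ∀ i : Fin n, HasFDerivAt (fun y : Fin n → ℝ => (y i - c i) ^ 2)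
      ((2 * (x i - c i)) • (ContinuousLinearMap.proj i : (Fin n → ℝ) →L[ℝ] ℝ)) x := by
    intro i
    have h0 : HasFDerivAt (fun y : Fin n → ℝ => y i)
        (ContinuousLinearMap.proj i : (Fin n → ℝ) →L[ℝ] ℝ) x :=
      (ContinuousLinearMap.proj (R := ℝ) (φ := fun _ : Fin n => ℝ) i).hasFDerivAt
    have h1 : HasFDerivAt (fun y : Fin n → ℝ => y i - c i)
        (ContinuousLinearMap.proj i : (Fin n → ℝ) →L[ℝ] ℝ) x := h0.sub_const _
    simpa [Function.comp_def] using (hasDerivAt_pow 2 (x i - c i)).comp_hasFDerivAt x h1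
  have := HasFDerivAt.fun_sum (fun i (_ : i ∈ Finset.univ) => h i)
  exact this

lemma qf_nonneg {n : ℕ} (c x : Fin n → ℝ) : 0 ≤ qf c x :=
  Finset.sum_nonneg fun _ _ => sq_nonneg _

lemma qf_pos {n : ℕ} (c x : Fin n → ℝ) (h : x ≠ c) : 0 < qf c x := by
  have : ∃ i, x i ≠ c i := by
    by_contra h'; push_neg at h'; exact h (funext h')
  obtain ⟨i, hi⟩ := this
  have h2 : 0 < (x i - c i) ^ 2 := by
    have : x i - c i ≠ 0 := sub_ne_zero.mpr hi
    positivity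
  calc 0 < (x i - c i) ^ 2 := h2
    _ ≤ qf c x := Finset.single_le_sum (f := fun j => (x j - c j) ^ 2)
        (fun j _ => sq_nonneg _) (Finset.mem_univ i)

lemma hasFDerivAt_qf_rpow {n : ℕ} (c x : Fin n → ℝ) (β : ℝ) (h : qf c x ≠ 0) :
    HasFDerivAt (fun y => qf c y ^ β) ((β * qf c x ^ (β - 1)) • Dq c x) x :=
  (hasFDerivAt_qf c x).rpow_const (Or.inl h)

lemma Dq_apply {n : ℕ} (c x : Fin n → ℝ) (j : Fin n) :
    Dq c x (Pi.single j 1) = 2 * (x j - c j) := by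
  simp [Dq, ContinuousLinearMap.sum_apply, Pi.single_apply]


lemma hasFDerivAt_inv_comp {E : Type*} [NormedAddCommGroup E] [NormedSpace ℝ E]
    {f : E → ℝ} {f' : E →L[ℝ] ℝ} {x : E} (hf : HasFDerivAt f f' x) (h : f x ≠ 0) :
    HasFDerivAt (fun y => (f y)⁻¹) ((-(f x ^ 2)⁻¹) • f') x :=
  (hasDerivAt_inv h).comp_hasFDerivAt x hf

end MPaux


set_option maxHeartbeats 2000000 in
/-- Corollary 3.2 of the paper: the classical multi-centered
Majumdar–Papapetrou solution of the electrovacuum system. -/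
theorem multi_centered_MP_solution
    (n : ℕ) (hn : 3 ≤ n) (s : ℕ) (c : Fin s → (Fin n → ℝ))
    (hc : Function.Injective c)
    (lam : Fin s → ℝ) (k k₁ : ℝ)
    (u : (Fin n → ℝ) → ℝ)
    (hu : ∀ x : Fin n → ℝ, x ∉ Set.range c →
      u x = (∑ l : Fin s,
        k * lam l * Real.sqrt (∑ i : Fin n, (x i - c l i) ^ 2) ^ ((2 : ℝ) - (n : ℝ))) - k₁)
    (Ω : Set (Fin n → ℝ)) (hΩ : IsOpen Ω) (hΩc : Ω ⊆ (Set.range c)ᶜ)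
    (hupos : ∀ x ∈ Ω, 0 < u x)
    (N φ ψ : (Fin n → ℝ) → ℝ)
    (hN : N = fun x => 1 / u x)
    (hφ : φ = fun x => N x ^ ((1 : ℝ) / ((n : ℝ) - 2)))
    (hψ : ψ = fun x => Real.sqrt (((n : ℝ) - 1) / (2 * ((n : ℝ) - 2))) * (1 - N x)) :
    ElectrostaticSystem Ω φ N ψ 0 := by
  classical
  have hn3 : (3 : ℝ) ≤ (n : ℝ) := by exact_mod_cast hn
  have hm0 : ((n : ℝ) - 2) ≠ 0 := by linarith
  have hn1 : ((n : ℝ) - 1) ≠ 0 := by linarith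
  set α : ℝ := ((2 : ℝ) - (n : ℝ)) / 2 with hα
  set p : ℝ := (1 : ℝ) / ((n : ℝ) - 2) with hp
  set a : ℝ := Real.sqrt (((n : ℝ) - 1) / (2 * ((n : ℝ) - 2))) with ha
  have ha2 : a ^ 2 = ((n : ℝ) - 1) / (2 * ((n : ℝ) - 2)) :=
    Real.sq_sqrt (by apply div_nonneg <;> linarith)
  set S : Set (Fin n → ℝ) := (Set.range c)ᶜ with hS
  have hSopen : IsOpen S := (Set.finite_range c).isClosed.isOpen_compl
  have hqpos : ∀ y ∈ S, ∀ l, 0 < qf (c l) y := by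
    intro y hy l
    refine qf_pos _ _ fun h => hy ⟨l, h.symm⟩
  set U : (Fin n → ℝ) → ℝ := fun y => (∑ l, k * lam l * qf (c l) y ^ α) - k₁ with hUdef
  have hUeq : ∀ y ∈ S, u y = U y := by
    intro y hy
    rw [hu y hy, hUdef]
    congr 1
    refine Finset.sum_congr rfl fun l _ => ?_
    rw [show (∑ i, (y i - c l i) ^ 2) = qf (c l) y from rfl, Real.sqrt_eq_rpow,
      ← Real.rpow_mul (qf_nonneg _ _)]
    congr 1
    rw [hα]; ring
  set DU : (Fin n → ℝ) → (Fin n → ℝ) →L[ℝ] ℝ :=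
    fun y => ∑ l, (k * lam l) • ((α * qf (c l) y ^ (α - 1)) • Dq (c l) y) with hDU
  set u1 : Fin n → (Fin n → ℝ) → ℝ :=
    fun i y => ∑ l, k * lam l * α * (qf (c l) y ^ (α - 1) * (2 * (y i - c l i))) with hu1
  have hDUapply : ∀ (y : Fin n → ℝ) (i : Fin n), DU y (Pi.single i 1) = u1 i y := by
    intro y i
    rw [hDU, hu1]
    simp only [ContinuousLinearMap.sum_apply, ContinuousLinearMap.smul_apply, Dq_apply,
      smul_eq_mul]
    exact Finset.sum_congr rfl fun l _ => by ring
  have hUd : ∀ y ∈ S, HasFDerivAt U (DU y) y := by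
    intro y hy
    have h := fun l (_ : l ∈ Finset.univ) =>
      ((hasFDerivAt_qf_rpow (c l) y α (hqpos y hy l).ne').const_mul (k * lam l))
    exact (HasFDerivAt.fun_sum h).sub_const k₁
  have hud : ∀ y ∈ Ω, HasFDerivAt u (DU y) y := by
    intro y hy
    exact (hUd y (hΩc hy)).congr_of_eventuallyEq
      (Filter.eventuallyEq_of_mem (hSopen.mem_nhds (hΩc hy)) fun z hz => hUeq z hz)
  have hpdu : ∀ y ∈ Ω, ∀ i, pd i u y = u1 i y := by
    intro y hy i
    show fderiv ℝ u y (Pi.single i 1) = u1 i y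
    rw [(hud y hy).fderiv, hDUapply]
  set D1 : Fin n → (Fin n → ℝ) → (Fin n → ℝ) →L[ℝ] ℝ := fun i y =>
    ∑ l, (k * lam l * α) •
      ((qf (c l) y ^ (α - 1)) • ((2 : ℝ) •
          (ContinuousLinearMap.proj i : (Fin n → ℝ) →L[ℝ] ℝ))
        + (2 * (y i - c l i)) • (((α - 1) * qf (c l) y ^ (α - 1 - 1)) • Dq (c l) y)) with hD1
  have hu1d : ∀ y ∈ S, ∀ i, HasFDerivAt (u1 i) (D1 i y) y := by
    intro y hy i
    rw [hu1, hD1]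
    refine HasFDerivAt.fun_sum fun l _ => ?_
    have hr := hasFDerivAt_qf_rpow (c l) y (α - 1) (hqpos y hy l).ne'
    have h0 : HasFDerivAt (fun z : Fin n → ℝ => z i)
        (ContinuousLinearMap.proj i : (Fin n → ℝ) →L[ℝ] ℝ) y :=
      (ContinuousLinearMap.proj (R := ℝ) (φ := fun _ : Fin n => ℝ) i).hasFDerivAt
    have hlin : HasFDerivAt (fun z : Fin n → ℝ => 2 * (z i - c l i))
        ((2 : ℝ) • (ContinuousLinearMap.proj i : (Fin n → ℝ) →L[ℝ] ℝ)) y :=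
      (h0.sub_const _).const_mul 2
    exact (hr.mul hlin).const_mul (k * lam l * α)
  have htrace : ∀ y ∈ S, ∑ j, D1 j y (Pi.single j 1) = 0 := by
    intro y hy
    have hcalc : ∀ j : Fin n, D1 j y (Pi.single j 1)
        = ∑ l, ((k * lam l * α) * (qf (c l) y ^ (α - 1) * 2)
          + (k * lam l * α) * ((α - 1) * qf (c l) y ^ (α - 1 - 1) * 4) * (y j - c l j) ^ 2) := by
      intro j
      rw [hD1]
      simp only [ContinuousLinearMap.sum_apply, ContinuousLinearMap.add_apply,
        ContinuousLinearMap.smul_apply, Dq_apply, smul_eq_mul, Pi.single_apply,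
        ContinuousLinearMap.proj_apply]
      refine Finset.sum_congr rfl fun l _ => ?_
      simp only [if_true]
      ring
    rw [Finset.sum_congr rfl fun j _ => hcalc j, Finset.sum_comm]
    refine Finset.sum_eq_zero fun l _ => ?_
    have hq := hqpos y hy l
    have hq1 : qf (c l) y ^ (α - 1) = qf (c l) y ^ (α - 1 - 1) * qf (c l) y := by
      rw [← Real.rpow_add_one hq.ne' (α - 1 - 1)]
      congr 1; ring
    have hsum : ∑ j : Fin n, ((k * lam l * α) * (qf (c l) y ^ (α - 1) * 2)
          + (k * lam l * α) * ((α - 1) * qf (c l) y ^ (α - 1 - 1) * 4) * (y j - c l j) ^ 2)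
        = (n : ℝ) * ((k * lam l * α) * (qf (c l) y ^ (α - 1) * 2))
          + (k * lam l * α) * ((α - 1) * qf (c l) y ^ (α - 1 - 1) * 4) * qf (c l) y := by
      rw [Finset.sum_add_distrib, Finset.sum_const, ← Finset.mul_sum]
      simp [qf]
    rw [hsum, hq1]
    have hαn : 2 * (n : ℝ) + 4 * α - 4 = 0 := by rw [hα]; ring
    linear_combination (k * lam l * α * (qf (c l) y ^ (α - 1 - 1) * qf (c l) y)) * hαn
  -- first derivatives of N, φ, ψ on Ω
  have hNy : ∀ y, N y = (u y)⁻¹ := by intro y; rw [hN]; simp [one_div]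
  have hNd : ∀ y ∈ Ω, HasFDerivAt N (-((u y ^ 2)⁻¹ • DU y)) y := by
    intro y hy
    have h := hasFDerivAt_inv_comp (hud y hy) (hupos y hy).ne'
    rw [hN]; simp only [one_div]; exact h.congr_fderiv (by ext; simp)
  set N1 : Fin n → (Fin n → ℝ) → ℝ := fun i y => -((u y ^ 2)⁻¹ * u1 i y) with hN1
  have hpdN : ∀ y ∈ Ω, ∀ i, pd i N y = N1 i y := by
    intro y hy i
    show fderiv ℝ N y (Pi.single i 1) = N1 i y
    rw [(hNd y hy).fderiv]
    simp [hN1, hDUapply]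
  have hNpos : ∀ y ∈ Ω, 0 < N y := fun y hy => by
    rw [hNy]; exact inv_pos.mpr (hupos y hy)
  have hφd : ∀ y ∈ Ω, HasFDerivAt φ ((p * N y ^ (p - 1)) • (-((u y ^ 2)⁻¹ • DU y))) y := by
    intro y hy
    have h := (hNd y hy).rpow_const (p := p) (Or.inl (hNpos y hy).ne')
    rw [hφ]; exact h
  set φ1 : Fin n → (Fin n → ℝ) → ℝ := fun i y => p * (u y)⁻¹ ^ (p - 1) * N1 i y with hφ1
  have hpdφ : ∀ y ∈ Ω, ∀ i, pd i φ y = φ1 i y := by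
    intro y hy i
    show fderiv ℝ φ y (Pi.single i 1) = φ1 i y
    rw [(hφd y hy).fderiv]
    simp [hφ1, hN1, hDUapply, hNy]
  have hψd : ∀ y ∈ Ω, HasFDerivAt ψ (a • (-(-((u y ^ 2)⁻¹ • DU y)))) y := by
    intro y hy
    have h := ((hNd y hy).const_sub 1).const_mul a
    rw [hψ]; exact h
  set ψ1 : Fin n → (Fin n → ℝ) → ℝ := fun i y => a * ((u y ^ 2)⁻¹ * u1 i y) with hψ1
  have hpdψ : ∀ y ∈ Ω, ∀ i, pd i ψ y = ψ1 i y := by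
    intro y hy i
    show fderiv ℝ ψ y (Pi.single i 1) = ψ1 i y
    rw [(hψd y hy).fderiv]
    simp [hψ1, hDUapply]
  -- now fix the point x
  intro x hx
  have hxS : x ∈ S := hΩc hx
  have ht : 0 < u x := hupos x hx
  have hinvne : (u x)⁻¹ ≠ 0 := inv_ne_zero ht.ne'
  have hstep : ∀ q : ℝ, (u x)⁻¹ ^ (q - 1) = (u x)⁻¹ ^ q * u x := by
    intro q
    rw [show q - 1 = q + (-1) from by ring, Real.rpow_add (inv_pos.mpr ht),
      Real.rpow_neg_one, inv_inv]
  have hBA : (u x)⁻¹ ^ (p - 1) = (u x)⁻¹ ^ p * u x := hstep p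
  have hCA : (u x)⁻¹ ^ (p - 1 - 1) = (u x)⁻¹ ^ p * u x ^ 2 := by
    rw [hstep (p - 1), hstep p]; ring
  have hφx : φ x = (u x)⁻¹ ^ p := by simp only [hφ, hNy]
  have hNx : N x = (u x)⁻¹ := hNy x
  have hevΩ : ∀ᶠ y in nhds x, y ∈ Ω := hΩ.mem_nhds hx
  -- second-derivative building blocks
  have hsq : HasFDerivAt (fun y => u y ^ 2) (((2 : ℕ) * u x ^ 1) • DU x) x :=
    (hasDerivAt_pow 2 (u x)).comp_hasFDerivAt x (hud x hx)
  have hisq := hasFDerivAt_inv_comp hsq (pow_ne_zero 2 ht.ne')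
  have hinvd := hasFDerivAt_inv_comp (hud x hx) ht.ne'
  have hNkey : ∀ j : Fin n, ∃ L : (Fin n → ℝ) →L[ℝ] ℝ, HasFDerivAt (N1 j) L x ∧
      ∀ i, L (Pi.single i 1)
        = 2 * (u1 i x * u1 j x) / u x ^ 3 - D1 j x (Pi.single i 1) / u x ^ 2 := by
    intro j
    refine ⟨_, (hisq.mul (hu1d x hxS j)).neg, fun i => ?_⟩
    simp only [ContinuousLinearMap.neg_apply, ContinuousLinearMap.add_apply,
      ContinuousLinearMap.smul_apply, smul_eq_mul, hDUapply]
    field_simp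
    ring
  have hN2 : ∀ i j, pd i (pd j N) x
      = 2 * (u1 i x * u1 j x) / u x ^ 3 - D1 j x (Pi.single i 1) / u x ^ 2 := by
    intro i j
    obtain ⟨L, hL, hLv⟩ := hNkey j
    have heq : pd j N =ᶠ[nhds x] N1 j := hevΩ.mono fun y hy => hpdN y hy j
    show fderiv ℝ (pd j N) x (Pi.single i 1) = _
    rw [heq.fderiv_eq, hL.fderiv, hLv]
  have hφ2 : ∀ i j, pd i (pd j φ) x
      = p * ((u x)⁻¹ ^ p) * ((p + 1) * (u1 i x * u1 j x) / u x ^ 2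
          - D1 j x (Pi.single i 1) / u x) := by
    intro i j
    obtain ⟨L, hL, hLv⟩ := hNkey j
    have hq := hinvd.rpow_const (p := p - 1) (Or.inl hinvne)
    have hcm := hq.const_mul p
    have hd := hcm.fun_mul hL
    have heq : pd j φ =ᶠ[nhds x] φ1 j := hevΩ.mono fun y hy => hpdφ y hy j
    show fderiv ℝ (pd j φ) x (Pi.single i 1) = _
    rw [heq.fderiv_eq, hd.fderiv]
    simp only [ContinuousLinearMap.add_apply, ContinuousLinearMap.smul_apply,
      smul_eq_mul, hDUapply]
    rw [hLv i, hBA, hCA, hN1]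
    field_simp
    ring
  have hψ2 : ∀ i j, pd i (pd j ψ) x
      = a * (D1 j x (Pi.single i 1) / u x ^ 2 - 2 * (u1 i x * u1 j x) / u x ^ 3) := by
    intro i j
    have hd := (hisq.fun_mul (hu1d x hxS j)).const_mul a
    have heq : pd j ψ =ᶠ[nhds x] ψ1 j := hevΩ.mono fun y hy => hpdψ y hy j
    show fderiv ℝ (pd j ψ) x (Pi.single i 1) = _
    rw [heq.fderiv_eq, hd.fderiv]
    simp only [ContinuousLinearMap.add_apply, ContinuousLinearMap.smul_apply,
      smul_eq_mul, hDUapply]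
    field_simp
    ring
  -- first derivative values at x
  have hN1x : ∀ i, pd i N x = -(u1 i x / u x ^ 2) := by
    intro i
    simp only [hpdN x hx i, hN1]
    field_simp
  have hφ1x : ∀ i, pd i φ x = -(p * (u x)⁻¹ ^ p * u1 i x / u x) := by
    intro i
    simp only [hpdφ x hx i, hφ1, hN1]
    rw [hBA]
    field_simp
  have hψ1x : ∀ i, pd i ψ x = a * (u1 i x / u x ^ 2) := by
    intro i
    simp only [hpdψ x hx i, hψ1]
    field_simp
  have hψψ : ∀ i j, pd i ψ x * pd j ψ x
      = (((n : ℝ) - 1) / (2 * ((n : ℝ) - 2))) * (u1 i x * u1 j x / u x ^ 4) := by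
    intro i j
    rw [hψ1x i, hψ1x j,
      show ∀ X Y : ℝ, a * X * (a * Y) = a ^ 2 * (X * Y) from fun X Y => by ring, ha2]
    ring
  have hψsq : ∀ i, (pd i ψ x) ^ 2
      = (((n : ℝ) - 1) / (2 * ((n : ℝ) - 2))) * (u1 i x * u1 i x / u x ^ 4) := by
    intro i
    rw [pow_two, hψψ i i]
  refine ⟨?_, ?_, ?_, ?_⟩
  · intro i j hij
    rw [hφ2 i j, hN2 i j, hφ1x i, hφ1x j, hN1x i, hN1x j, hψψ i j, hφx, hNx, hp]
    field_simp
    ring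
  · intro i
    have hdiag : φ x * (((n : ℝ) - 2) * N x * pd i (pd i φ) x - φ x * pd i (pd i N) x
        - 2 * pd i φ x * pd i N x + (2 * φ x / N x) * (pd i ψ x) ^ 2) = 0 := by
      rw [hφ2 i i, hN2 i i, hφ1x i, hN1x i, hψsq i, hφx, hNx, hp]
      field_simp
      ring
    have hterm : ∀ kk : Fin n, (φ x * N x * pd kk (pd kk φ) x
        + φ x * pd kk φ x * pd kk N x
        - ((n : ℝ) - 1) * N x * (pd kk φ x) ^ 2
        - (2 / (((n : ℝ) - 1) * N x)) * (φ x) ^ 2 * (pd kk ψ x) ^ 2)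
        = (-(p * ((u x)⁻¹ ^ p) ^ 2 / u x ^ 2)) * D1 kk x (Pi.single kk 1) := by
      intro kk
      rw [hφ2 kk kk, hφ1x kk, hN1x kk, hψsq kk, hφx, hNx, hp]
      field_simp
      ring
    rw [Finset.sum_congr rfl fun kk _ => hterm kk, ← Finset.mul_sum, htrace x hxS,
      mul_zero, add_zero, hdiag]
    norm_num
  · have hterm : ∀ kk : Fin n, (N x * φ x * pd kk (pd kk ψ) x
        - ((n : ℝ) - 2) * N x * pd kk φ x * pd kk ψ x
        - φ x * pd kk ψ x * pd kk N x)
        = (a * (u x)⁻¹ ^ p / u x ^ 3) * D1 kk x (Pi.single kk 1) := by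
      intro kk
      rw [hψ2 kk kk, hφ1x kk, hψ1x kk, hN1x kk, hφx, hNx, hp]
      field_simp
      ring
    rw [Finset.sum_congr rfl fun kk _ => hterm kk, ← Finset.mul_sum, htrace x hxS, mul_zero]
  · have hterm : ∀ kk : Fin n, ((φ x) ^ 2 * N x * pd kk (pd kk N) x
        - ((n : ℝ) - 2) * φ x * pd kk φ x * N x * pd kk N x
        - (2 * ((n : ℝ) - 2) / ((n : ℝ) - 1)) * (φ x) ^ 2 * (pd kk ψ x) ^ 2)
        = (-(((u x)⁻¹ ^ p) ^ 2 / u x ^ 3)) * D1 kk x (Pi.single kk 1) := by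
      intro kk
      rw [hN2 kk kk, hφ1x kk, hN1x kk, hψsq kk, hφx, hNx, hp]
      field_simp
      ring
    rw [Finset.sum_congr rfl fun kk _ => hterm kk, ← Finset.mul_sum, htrace x hxS, mul_zero]
    norm_num
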